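/- Let κ = 1 + √2 and ω ∈ ℝ. If (θ0, θ1, θ2, θ3, ζ) ∈ ℝ⁵ is an equilibrium of the minimal frequency-spiral model with parameter ω and θ1 = −θ0, then sin ζ = cos ζ (i.e., ζ ≡ π/4 modulo π). (This underlies the claim that, up to rotations, the equilibrium with θ0 = −θ1 and θ2 = −θ3 at ω = 0 has ζ = π/4.) -/
import Mathlib


open Real

/-- An equilibrium of the minimal frequency-spiral model with parameter `ω` and
`κ = 1 + √2`: all five right-hand sides of the ODE system vanish. -/
def IsMinimalSpiralEquilibrium (ω θ0 θ1 θ2 θ3 ζ : ℝ) : Prop :=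
  Real.sin (ζ - θ0) - (1 + Real.sqrt 2) * Real.sin θ0 = 0 ∧
  Real.sin (ζ - θ1 - Real.pi / 2) - (1 + Real.sqrt 2) * Real.sin θ1 = 0 ∧
  Real.sin (ζ - θ2 - Real.pi) - (1 + Real.sqrt 2) * Real.sin θ2 = 0 ∧
  Real.sin (ζ - θ3 - 3 * Real.pi / 2) - (1 + Real.sqrt 2) * Real.sin θ3 = 0 ∧
  ω - Real.sin (ζ - θ0) - Real.sin (ζ - θ1 - Real.pi / 2)
    - Real.sin (ζ - θ2 - Real.pi) - Real.sin (ζ - θ3 - 3 * Real.pi / 2) = 0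

/-- If `(θ0, θ1, θ2, θ3, ζ)` is an equilibrium of the minimal frequency-spiral model
(`κ = 1 + √2`) with `θ1 = −θ0`, then `sin ζ = cos ζ`, i.e. `ζ ≡ π/4` modulo `π`. -/
theorem minimalSpiral_equilibrium_zeta_pi_quarter (ω θ0 θ1 θ2 θ3 ζ : ℝ)
    (h : IsMinimalSpiralEquilibrium ω θ0 θ1 θ2 θ3 ζ) (hsym : θ1 = -θ0) :
    Real.sin ζ = Real.cos ζ := by
  obtain ⟨h1, h2, -, -, -⟩ := h
  rw [hsym] at h2
  rw [Real.sin_sub] at h1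
  rw [show ζ - -θ0 - Real.pi / 2 = (ζ + θ0) - Real.pi / 2 by ring, Real.sin_sub,
    Real.sin_pi_div_two, Real.cos_pi_div_two, Real.sin_neg, Real.cos_add,
    Real.sin_add] at h2
  have hs2 : Real.sqrt 2 * Real.sqrt 2 = 2 := Real.mul_self_sqrt (by norm_num)
  have hs2pos : (1:ℝ) ≤ Real.sqrt 2 := by nlinarith [Real.sqrt_nonneg 2]
  by_cases hc : Real.cos θ0 + Real.sin θ0 = 0
  · exfalso
    have hpy0 := Real.sin_sq_add_cos_sq θ0
    have hpyz := Real.sin_sq_add_cos_sq ζ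
    have hA : Real.sin θ0 * (Real.sin ζ + Real.cos ζ + 1 + Real.sqrt 2) = 0 := by
      linear_combination -h1 + Real.sin ζ * hc
    have hs0sq : Real.sin θ0 ^ 2 = 1 / 2 := by
      linear_combination (1/2) * hpy0 - ((Real.cos θ0 - Real.sin θ0)/2) * hc
    have hs0ne : Real.sin θ0 ≠ 0 := by
      intro h0
      rw [h0] at hs0sq
      norm_num at hs0sq
    have hB : Real.sin ζ + Real.cos ζ + 1 + Real.sqrt 2 = 0 :=
      (mul_eq_zero.mp hA).resolve_left hs0ne
    nlinarith [sq_nonneg (Real.sin ζ - Real.cos ζ)]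
  · have key : (Real.sin ζ - Real.cos ζ) * (Real.cos θ0 + Real.sin θ0) = 0 := by
      nlinarith [h1, h2]
    rcases mul_eq_zero.mp key with h' | h'
    · linarith
    · exact absurd h' hc
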